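/- For R ≫ L₊, the static potential V(R) = σ(R/L₊)^{D−1}√(1+R²/L₊²) − q(R/L₊)^D expressed in the canonical variable φ = L₊^{(4−D)/2}(2√σ/(D−2))R^{(D−2)/2} has the expansion V = ((D−2)²/8)(φ/L₊)² + λ_AdS φ^{2D/(D−2)} + subleading, where λ_AdS = −((D−2)/2)^{2D/(D−2)} σ^{−2/(D−2)} ((q−σ)/σ) L₊^{−2D/(D−2)}. -/

import Mathlib

open MeasureTheory Real Filter Topology

noncomputable section

/-- The static thin-wall potential `V(R) = σ(R/L₊)^{D−1}√(1+R²/L₊²) − q(R/L₊)^D`. -/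
def staticPotential (D : ℕ) (σ q Lp R : ℝ) : ℝ :=
  σ * (R / Lp) ^ ((D : ℝ) - 1) * Real.sqrt (1 + R ^ 2 / Lp ^ 2) - q * (R / Lp) ^ (D : ℝ)

/-- The canonical field variable `φ = L₊^{(4−D)/2}(2√σ/(D−2)) R^{(D−2)/2}`. -/
def canonicalField (D : ℕ) (σ Lp R : ℝ) : ℝ :=
  Lp ^ ((4 - (D : ℝ)) / 2) * (2 * Real.sqrt σ / ((D : ℝ) - 2)) * R ^ (((D : ℝ) - 2) / 2)

/-- `λ_AdS = −((D−2)/2)^{2D/(D−2)} σ^{−2/(D−2)} ((q−σ)/σ) L₊^{−2D/(D−2)}`. -/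
def lambdaAdS (D : ℕ) (σ q Lp : ℝ) : ℝ :=
  -((((D : ℝ) - 2) / 2) ^ (2 * (D : ℝ) / ((D : ℝ) - 2))
      * σ ^ (-(2 : ℝ) / ((D : ℝ) - 2)) * ((q - σ) / σ)
      * Lp ^ (-(2 * (D : ℝ) / ((D : ℝ) - 2))))

set_option maxHeartbeats 1000000 in
/-- For `R ≫ L₊`, in the canonical variable `φ`, the static potential expands as
`V = ((D−2)²/8)(φ/L₊)² + λ_AdS φ^{2D/(D−2)} + subleading`, where the subleading terms are
suppressed by `L₊²/R²` relative to the leading scale `(R/L₊)^D`. -/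
theorem potential_expansion (D : ℕ) (hD : 2 < D) (σ q Lp : ℝ)
    (hσ : 0 < σ) (hqσ : σ < q) (hLp : 0 < Lp) :
    ∃ C : ℝ, 0 < C ∧ ∃ R₀ : ℝ, 0 < R₀ ∧ ∀ R : ℝ, R₀ ≤ R →
      abs (staticPotential D σ q Lp R
          - ((D : ℝ) - 2) ^ 2 / 8 * (canonicalField D σ Lp R / Lp) ^ 2
          - lambdaAdS D σ q Lp * (canonicalField D σ Lp R) ^ (2 * (D : ℝ) / ((D : ℝ) - 2)))
        ≤ C * (Lp ^ 2 / R ^ 2) * (R / Lp) ^ (D : ℝ) := by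
  refine ⟨σ, hσ, Lp, hLp, fun R hR => ?_⟩
  have hR0 : 0 < R := lt_of_lt_of_le hLp hR
  set d : ℝ := (D : ℝ) with hd
  have hd2 : (2 : ℝ) < d := by rw [hd]; exact_mod_cast hD
  have hd2' : d - 2 ≠ 0 := by linarith
  set x : ℝ := R / Lp with hxdef
  have hx1 : (1 : ℝ) ≤ x := (one_le_div hLp).mpr hR
  have hx0 : (0 : ℝ) < x := lt_of_lt_of_le one_pos hx1
  -- sqrt expansion bound
  have hsq : |Real.sqrt (1 + x ^ 2) - (x + 1 / (2 * x))| ≤ 1 / (2 * x ^ 3) := by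
    have h1 : Real.sqrt (1 + x ^ 2) ≤ x + 1 / (2 * x) := by
      have hle : 1 + x ^ 2 ≤ (x + 1 / (2 * x)) ^ 2 := by
        have expand : (x + 1 / (2 * x)) ^ 2 = x ^ 2 + 1 + (1 / (2 * x)) ^ 2 := by
          field_simp; ring
        rw [expand]
        nlinarith [sq_nonneg (1 / (2 * x))]
      calc Real.sqrt (1 + x ^ 2) ≤ Real.sqrt ((x + 1 / (2 * x)) ^ 2) := Real.sqrt_le_sqrt hle
        _ = x + 1 / (2 * x) := Real.sqrt_sq (by positivity)
    have h2 : x + 1 / (2 * x) - 1 / (2 * x ^ 3) ≤ Real.sqrt (1 + x ^ 2) := by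
      have hnn : 0 ≤ x + 1 / (2 * x) - 1 / (2 * x ^ 3) := by
        have hx3 : x ≤ x ^ 3 := by nlinarith
        have : 1 / (2 * x ^ 3) ≤ 1 / (2 * x) := by
          rw [div_le_div_iff₀ (by positivity) (by positivity)]
          nlinarith
        have : 0 < x := hx0
        linarith [hx0]
      have hle : (x + 1 / (2 * x) - 1 / (2 * x ^ 3)) ^ 2 ≤ 1 + x ^ 2 := by
        have hx2 : (1 : ℝ) ≤ x ^ 2 := by nlinarith
        have hxne : x ≠ 0 := hx0.ne'
        field_simp
        nlinarith [sq_nonneg x, hx2, hx0, sq_nonneg (x^2 - 1), pow_pos hx0 6, pow_pos hx0 4]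
      calc x + 1 / (2 * x) - 1 / (2 * x ^ 3)
          = Real.sqrt ((x + 1 / (2 * x) - 1 / (2 * x ^ 3)) ^ 2) := (Real.sqrt_sq hnn).symm
        _ ≤ Real.sqrt (1 + x ^ 2) := Real.sqrt_le_sqrt hle
    rw [abs_le]
    constructor <;> [linarith; linarith [h1, mul_pos two_pos (pow_pos hx0 3)]]
  -- identity A : the quadratic term
  have hLpd2 : (0 : ℝ) < Lp ^ (d - 2) := Real.rpow_pos_of_pos hLp _
  have e1 : (Lp ^ ((4 - d) / 2)) ^ (2 : ℕ) = Lp ^ (4 - d) := by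
    rw [← Real.rpow_natCast (Lp ^ ((4 - d) / 2)) 2, ← Real.rpow_mul hLp.le]
    norm_num
  have e2 : (R ^ ((d - 2) / 2)) ^ (2 : ℕ) = R ^ (d - 2) := by
    rw [← Real.rpow_natCast (R ^ ((d - 2) / 2)) 2, ← Real.rpow_mul hR0.le]
    norm_num
  have e5 : Lp ^ (4 - d) = Lp ^ (2 : ℕ) / Lp ^ (d - 2) := by
    rw [eq_div_iff hLpd2.ne', ← Real.rpow_add hLp, show 4 - d + (d - 2) = ((2 : ℕ) : ℝ) by push_cast; ring,
      Real.rpow_natCast]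
  have c2 : (canonicalField D σ Lp R) ^ 2 = (Lp ^ (2:ℕ) / Lp ^ (d - 2)) * (4 * σ / (d - 2) ^ 2) * R ^ (d - 2) := by
    unfold canonicalField
    rw [mul_pow, mul_pow, e1, e2, div_pow, mul_pow, Real.sq_sqrt hσ.le, e5]
    ring
  have e4 : x ^ (d - 2) = R ^ (d - 2) / Lp ^ (d - 2) := by
    rw [hxdef, Real.div_rpow hR0.le hLp.le]
  have hA : (d - 2) ^ 2 / 8 * (canonicalField D σ Lp R / Lp) ^ 2 = σ / 2 * x ^ (d - 2) := by
    rw [div_pow, c2, e4]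
    field_simp
    ring
  -- identity B : the lambda term
  set γ : ℝ := 2 * d / (d - 2) with hγ
  have hsσ : Real.sqrt σ = σ ^ (1/2 : ℝ) := Real.sqrt_eq_rpow σ
  have hbne : (0:ℝ) ≤ 2 / (d - 2) := div_nonneg (by norm_num) (by linarith)
  have f1 : (canonicalField D σ Lp R) ^ γ
      = Lp ^ ((4 - d) / 2 * γ) * ((2 / (d - 2)) ^ γ * σ ^ (1/2 * γ)) * R ^ (d : ℝ) := by
    have f0 : canonicalField D σ Lp R
        = Lp ^ ((4 - d) / 2) * ((2 / (d - 2)) * σ ^ (1/2 : ℝ)) * R ^ ((d - 2) / 2) := by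
      unfold canonicalField; rw [hsσ]; ring
    rw [f0, Real.mul_rpow
        (mul_nonneg (Real.rpow_nonneg hLp.le _) (mul_nonneg hbne (Real.rpow_nonneg hσ.le _)))
        (Real.rpow_nonneg hR0.le _),
      Real.mul_rpow (Real.rpow_nonneg hLp.le _) (mul_nonneg hbne (Real.rpow_nonneg hσ.le _)),
      Real.mul_rpow hbne (Real.rpow_nonneg hσ.le _),
      ← Real.rpow_mul hLp.le, ← Real.rpow_mul hσ.le, ← Real.rpow_mul hR0.le,
      show (d - 2) / 2 * γ = d by rw [hγ]; field_simp [hd2']]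
  have g1 : ((d - 2) / 2) ^ γ * (2 / (d - 2)) ^ γ = 1 := by
    rw [← Real.mul_rpow (div_nonneg (by linarith) (by norm_num)) hbne,
      show (d - 2) / 2 * (2 / (d - 2)) = 1 by field_simp [hd2'], Real.one_rpow]
  have g2 : σ ^ (-(2:ℝ) / (d - 2)) * σ ^ (1/2 * γ) = σ := by
    rw [← Real.rpow_add hσ, show -(2:ℝ) / (d - 2) + 1/2 * γ = 1 by rw [hγ]; field_simp [hd2']; ring, Real.rpow_one]
  have g3 : Lp ^ (-γ) * Lp ^ ((4 - d) / 2 * γ) = Lp ^ (-d) := by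
    rw [← Real.rpow_add hLp]
    congr 1
    rw [hγ]
    field_simp [hd2']
    ring
  have hB : lambdaAdS D σ q Lp * (canonicalField D σ Lp R) ^ γ = (σ - q) * x ^ (d : ℝ) := by
    have hx : x ^ (d:ℝ) = R ^ (d:ℝ) * Lp ^ (-d) := by
      rw [hxdef, Real.div_rpow hR0.le hLp.le, Real.rpow_neg hLp.le, div_eq_mul_inv]
    rw [f1, hx]
    unfold lambdaAdS
    rw [show (-((((D : ℝ) - 2) / 2) ^ (2 * (D : ℝ) / ((D : ℝ) - 2))
      * σ ^ (-(2 : ℝ) / ((D : ℝ) - 2)) * ((q - σ) / σ)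
      * Lp ^ (-(2 * (D : ℝ) / ((D : ℝ) - 2)))))
      * (Lp ^ ((4 - d) / 2 * γ) * ((2 / (d - 2)) ^ γ * σ ^ (1/2 * γ)) * R ^ (d : ℝ))
      = -((((d - 2) / 2) ^ γ * (2 / (d - 2)) ^ γ) * (σ ^ (-(2:ℝ) / (d - 2)) * σ ^ (1/2 * γ))
          * (Lp ^ (-γ) * Lp ^ ((4 - d) / 2 * γ)) * ((q - σ) / σ) * R ^ (d:ℝ)) from by ring,
      g1, g2, g3]
    field_simp
    ring
  -- the potential in terms of x
  have hV : staticPotential D σ q Lp R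
      = σ * x ^ (d - 1) * Real.sqrt (1 + x ^ 2) - q * x ^ (d : ℝ) := by
    unfold staticPotential
    rw [div_pow]
  -- key algebraic identity
  have exd : x ^ (d : ℝ) = x ^ (d - 1) * x := by
    have h := Real.rpow_add_one hx0.ne' (d - 1)
    rwa [show d - 1 + 1 = d by ring] at h
  have exd1 : x ^ (d - 1) = x ^ (d - 2) * x := by
    have h := Real.rpow_add_one hx0.ne' (d - 2)
    rwa [show d - 2 + 1 = d - 1 by ring] at h
  have key : staticPotential D σ q Lp R
      - (d - 2) ^ 2 / 8 * (canonicalField D σ Lp R / Lp) ^ 2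
      - lambdaAdS D σ q Lp * (canonicalField D σ Lp R) ^ γ
      = σ * x ^ (d - 1) * (Real.sqrt (1 + x ^ 2) - (x + 1 / (2 * x))) := by
    rw [hV, hA, hB, exd, exd1]
    field_simp
    ring
  rw [key, abs_mul, abs_of_pos (by positivity : (0:ℝ) < σ * x ^ (d - 1))]
  have step1 : σ * x ^ (d - 1) * |Real.sqrt (1 + x ^ 2) - (x + 1 / (2 * x))|
      ≤ σ * x ^ (d - 1) * (1 / (2 * x ^ 3)) := by
    apply mul_le_mul_of_nonneg_left hsq (by positivity)
  refine le_trans step1 ?_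
  have hLR : Lp ^ 2 / R ^ 2 = 1 / x ^ 2 := by
    rw [hxdef]; field_simp
  rw [hLR]
  have r1 : x ^ (d + 1) = x ^ (d - 2) * x ^ (3:ℕ) := by
    rw [← Real.rpow_natCast x 3, ← Real.rpow_add hx0]
    congr 1; push_cast; ring
  have r2 : x ^ (d : ℝ) = x ^ (d - 2) * x ^ (2:ℕ) := by
    rw [← Real.rpow_natCast x 2, ← Real.rpow_add hx0]
    congr 1; push_cast; ring
  have h19 : x ^ (d - 1) ≤ x ^ (d + 1) := Real.rpow_le_rpow_of_exponent_le hx1 (by linarith)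
  have hxd2 : (0:ℝ) < x ^ (d - 2) := Real.rpow_pos_of_pos hx0 _
  calc σ * x ^ (d - 1) * (1 / (2 * x ^ 3))
      ≤ σ * x ^ (d + 1) * (1 / (2 * x ^ 3)) := by
        apply mul_le_mul_of_nonneg_right (mul_le_mul_of_nonneg_left h19 hσ.le) (by positivity)
    _ = σ * x ^ (d - 2) / 2 := by rw [r1]; field_simp
    _ ≤ σ * x ^ (d - 2) := by nlinarith
    _ = σ * (1 / x ^ 2) * x ^ (d : ℝ) := by rw [r2]; field_simp
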